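/- Let A, B be finite subsets of ℕ² and let p be a nondominated point of A ⊙ B = {(min(a₁,b₁), min(a₂,b₂)) : (a₁,a₂) ∈ A, (b₁,b₂) ∈ B}. Then there exist a nondominated point a = (a₁,a₂) of A and a nondominated point b = (b₁,b₂) of B with p = (min(a₁,b₁), min(a₂,b₂)). -/

import Mathlib

/-- The set of nondominated points (for minimization) of `Y ⊆ ℕ²`. -/
def ND (Y : Set (ℕ × ℕ)) : Set (ℕ × ℕ) :=
  {y ∈ Y | ¬ ∃ y' ∈ Y, y' ≤ y ∧ y' ≠ y}

/-- Componentwise minimum of two points of `ℕ²`. -/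
def odot (a b : ℕ × ℕ) : ℕ × ℕ := (min a.1 b.1, min a.2 b.2)

/-- `A ⊙ B = {(min(a₁,b₁), min(a₂,b₂)) : a ∈ A, b ∈ B}`. -/
def odotSet (A B : Set (ℕ × ℕ)) : Set (ℕ × ℕ) := Set.image2 odot A B

lemma exists_nd_le (A : Set (ℕ × ℕ)) (hA : A.Finite) {x : ℕ × ℕ} (hx : x ∈ A) :
    ∃ m ∈ ND A, m ≤ x := by
  have hS : ({y ∈ A | y ≤ x}).Finite := hA.subset (fun y hy => hy.1)
  obtain ⟨m, hm, hmin⟩ := Set.Finite.exists_minimalFor id _ hS ⟨x, hx, le_refl x⟩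
  refine ⟨m, ⟨hm.1, ?_⟩, hm.2⟩
  rintro ⟨y, hyA, hyle, hyne⟩
  exact hyne (le_antisymm hyle (hmin ⟨hyA, le_trans hyle hm.2⟩ hyle))

lemma odot_mono {a b a' b' : ℕ × ℕ} (ha : a' ≤ a) (hb : b' ≤ b) :
    odot a' b' ≤ odot a b :=
  ⟨min_le_min ha.1 hb.1, min_le_min ha.2 hb.2⟩

theorem stmt14 (A B : Set (ℕ × ℕ)) (hA : A.Finite) (hB : B.Finite)
    (p : ℕ × ℕ) (hp : p ∈ ND (odotSet A B)) :
    ∃ a ∈ ND A, ∃ b ∈ ND B, p = odot a b := by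
  obtain ⟨⟨a, haA, b, hbB, hab⟩, hnd⟩ := hp
  obtain ⟨a', ha', haa⟩ := exists_nd_le A hA haA
  obtain ⟨b', hb', hbb⟩ := exists_nd_le B hB hbB
  refine ⟨a', ha', b', hb', ?_⟩
  have hmem : odot a' b' ∈ odotSet A B := Set.mem_image2_of_mem ha'.1 hb'.1
  have hle : odot a' b' ≤ p := hab ▸ odot_mono haa hbb
  by_contra hne
  exact hnd ⟨odot a' b', hmem, hle, fun h => hne h.symm⟩
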